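/- Let I = ((x_1 x_n)^{w_1}, ..., (x_{n-1} x_n)^{w_{n-1}}) ⊆ S = K[x_1,...,x_n] with w_1 ≥ w_2 ≥ ... ≥ w_{n-1} ≥ 1. Then for any t ≥ 2, the ideal ((I^t : x_{n-1}^{w_{n-1}}) + (x_n^{w_{n-1}})) equals (x_n^{w_{n-1}}). -/

import Mathlib

open MvPolynomial

lemma X_not_dvd_X {K : Type} [Field K] {n : ℕ} {i j : Fin n} (h : i ≠ j) :
    ¬ (X i : MvPolynomial (Fin n) K) ∣ X j := by
  intro ⟨c, hc⟩
  have := congrArg (eval fun k => if k = i then (0 : K) else 1) hc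
  simp [h.symm] at this


lemma mv_prime_X {K : Type} [Field K] {n : ℕ} (i : Fin n) :
    Prime (X i : MvPolynomial (Fin n) K) := by
  classical
  have h1 : (X i : MvPolynomial (Fin n) K)
      = rename ((↑) : ({i} : Set (Fin n)) → Fin n) (X ⟨i, rfl⟩) := by simp
  rw [h1, MvPolynomial.prime_rename_iff]
  haveI : Unique ({i} : Set (Fin n)) := Set.uniqueSingleton i
  let e := (renameEquiv K (Equiv.equivPUnit.{1,1} ({i} : Set (Fin n)))).trans (pUnitAlgEquiv K)
  have h2 : e.toMulEquiv (X ⟨i, rfl⟩) = Polynomial.X := by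
    show e (X ⟨i, rfl⟩) = Polynomial.X
    simp [e, renameEquiv_apply, pUnitAlgEquiv]
  have h3 : Prime (X ⟨i, rfl⟩ : MvPolynomial ({i} : Set (Fin n)) K) :=
    (MulEquiv.prime_iff (p := (X ⟨i, rfl⟩ : MvPolynomial ({i} : Set (Fin n)) K)) e.toMulEquiv).mp (by rw [h2]; exact Polynomial.prime_X)
  exact h3

/-- for the weighted star edge ideal with `w_1 ≥ ⋯ ≥ w_{n-1} ≥ 1`,
`(I^t : x_{n-1}^{w_{n-1}}) + (x_n^{w_{n-1}}) = (x_n^{w_{n-1}})` for all `t ≥ 2`.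
Here the star has `m+2` vertices with center `x_n = x_{m+2}` and
`x_{n-1} = x_{m+1}` is the leaf of the last edge. -/
theorem star_colon_sup (K : Type) [Field K] (m : ℕ) (w : Fin (m + 1) → ℕ)
    (hw : ∀ i, 1 ≤ w i) (hmono : ∀ i j : Fin (m + 1), i ≤ j → w j ≤ w i)
    (t : ℕ) (ht : 2 ≤ t)
    (I : Ideal (MvPolynomial (Fin (m + 2)) K))
    (hI : I = Ideal.span (Set.range fun i : Fin (m + 1) =>
      (X i.castSucc * X (Fin.last (m + 1))) ^ w i)) :
    ((I ^ t).colon ((Ideal.span {X ((Fin.last m).castSucc) ^ w (Fin.last m)} :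
        Ideal (MvPolynomial (Fin (m + 2)) K)) : Set (MvPolynomial (Fin (m + 2)) K))) ⊔
        Ideal.span {X (Fin.last (m + 1)) ^ w (Fin.last m)} =
      Ideal.span {X (Fin.last (m + 1)) ^ w (Fin.last m)} := by
  set wn := w (Fin.last m)
  set xn : MvPolynomial (Fin (m + 2)) K := X (Fin.last (m + 1))
  set xl : MvPolynomial (Fin (m + 2)) K := X ((Fin.last m).castSucc)
  refine sup_eq_right.mpr ?_
  -- I ≤ (x_n^{wn})
  have hIle : I ≤ Ideal.span {xn ^ wn} := by
    rw [hI, Ideal.span_le]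
    rintro _ ⟨i, rfl⟩
    rw [SetLike.mem_coe, Ideal.mem_span_singleton]
    calc xn ^ wn ∣ xn ^ w i := pow_dvd_pow _ (hmono i (Fin.last m) (Fin.le_last i))
      _ ∣ (X i.castSucc * xn) ^ w i := by
          rw [mul_pow]; exact dvd_mul_left _ _
  have hIt : I ^ t ≤ Ideal.span {xn ^ (t * wn)} := by
    calc I ^ t ≤ (Ideal.span {xn ^ wn}) ^ t := Ideal.pow_right_mono hIle t
      _ = Ideal.span {(xn ^ wn) ^ t} := Ideal.span_singleton_pow _ _
      _ = Ideal.span {xn ^ (t * wn)} := by rw [← pow_mul, mul_comm]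
  intro f hf
  rw [Ideal.mem_colon_span_singleton] at hf
  have hdvd : xn ^ (t * wn) ∣ f * xl ^ wn := by
    rw [← Ideal.mem_span_singleton]; exact hIt hf
  have hxn : Prime xn := mv_prime_X _
  have hnd : ¬ xn ∣ xl ^ wn := by
    intro h
    exact X_not_dvd_X (by simp [Fin.ext_iff, Fin.last]) (hxn.dvd_of_dvd_pow h)
  have hdf : xn ^ (t * wn) ∣ f := (Prime.pow_dvd_of_dvd_mul_right hxn _ hnd) hdvd
  rw [Ideal.mem_span_singleton]
  exact dvd_trans (pow_dvd_pow _ (Nat.le_mul_of_pos_left wn (by omega))) hdf
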